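/- Let n ≥ 2 and consider the hypergraph Γ_n of arity four on ℝ^n whose hyperedges are all vertex sets of non-degenerate rectangles. Assuming the Continuum Hypothesis (and the Axiom of Choice), the chromatic number of Γ_n is countable: there exists a function c : ℝ^n → ℕ such that no non-degenerate rectangle has all four vertices of the same color. -/

import Mathlib

open RealInnerProductSpace

/-- `IsRectangle x₀ x₁ x₂ x₃` : the four points form a Euclidean rectangle where `x₀`
and `x₁` are opposite vertices and `x₂`, `x₃` are opposite vertices. -/
def IsRectangle {n : ℕ} (x₀ x₁ x₂ x₃ : EuclideanSpace ℝ (Fin n)) : Prop :=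
  x₀ + x₁ = x₂ + x₃ ∧ ⟪x₂ - x₀, x₃ - x₀⟫ = 0

section Aux

open Cardinal Set Function


noncomputable section

/-- Extend an injection on a countable set to a globally defined function. -/
lemma exists_injOn_nat' {α : Type*} {s : Set α} (hs : s.Countable) :
    ∃ f : α → ℕ, Set.InjOn f s := by
  classical
  obtain ⟨f, hf⟩ := Set.countable_iff_exists_injective.mp hs
  refine ⟨fun x => if h : x ∈ s then f ⟨x, h⟩ else 0, ?_⟩
  intro x hx y hy hxy
  simp only [dif_pos hx, dif_pos hy] at hxy
  exact Subtype.ext_iff.mp (hf hxy)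

/-- Sierpiński-type coloring: under `#α ≤ ℵ₁`, a countable coloring of pairs with no
monochromatic combinatorial rectangle. -/
lemma sier {α : Type} (h : #α ≤ Cardinal.aleph 1) :
    ∃ p : α → α → ℕ, ∀ a a' b b' : α, a ≠ a' → b ≠ b' →
      p a b = p a' b → p a b = p a b' → False := by
  classical
  set β := (Cardinal.aleph 1).ord.ToType with hβ
  have hcard : #α ≤ #β := by
    rw [Cardinal.mk_toType, Cardinal.card_ord]; exact h
  obtain ⟨e⟩ := Cardinal.le_def _ _ |>.mp hcard
  have hIic : ∀ z : β, (Set.Iic z).Countable := by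
    intro z
    have h1 : (Set.Iio z).Countable := by
      rw [Cardinal.countable_iff_lt_aleph_one]
      exact Cardinal.mk_Iio_ord_toType z
    rw [← Set.Iio_insert]
    exact h1.insert z
  have hseg : ∀ b : α, ({a : α | e a ≤ e b}).Countable := by
    intro b
    have : {a : α | e a ≤ e b} = e ⁻¹' (Set.Iic (e b)) := rfl
    rw [this]
    exact (hIic (e b)).preimage e.injective
  choose f hf using fun b : α => exists_injOn_nat' (hseg b)
  refine ⟨fun a b => if e a ≤ e b then 2 * f b a else 2 * f a b + 1, ?_⟩
  intro a a' b b' ha hb h1 h2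
  dsimp only at h1 h2
  by_cases hab : e a ≤ e b
  · rw [if_pos hab] at h1 h2
    by_cases h3 : e a' ≤ e b
    · rw [if_pos h3] at h1
      exact ha (hf b hab h3 (by omega))
    · rw [if_neg h3] at h1; omega
  · rw [if_neg hab] at h1 h2
    by_cases h4 : e a ≤ e b'
    · rw [if_pos h4] at h2; omega
    · rw [if_neg h4] at h2
      have hba : e b ≤ e a := le_of_not_ge hab
      have hba' : e b' ≤ e a := le_of_not_ge h4
      exact hb (hf a hba hba' (by omega))

/-- Erdős–Kakutani-type coloring of `ℝ`: under CH, a countable coloring such that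
monochromatic solutions of `a + b = c + d` are trivial. -/
lemma ek (hR : #ℝ ≤ Cardinal.aleph 1) :
    ∃ g : ℝ → ℕ, ∀ a b c d : ℝ, a + b = c + d →
      g a = g b → g b = g c → g c = g d →
      (a = c ∧ b = d) ∨ (a = d ∧ b = c) := by
  classical
  set β := (Cardinal.aleph 1).ord.ToType with hβ
  have hcard : #ℝ ≤ #β := by
    rw [Cardinal.mk_toType, Cardinal.card_ord]; exact hR
  obtain ⟨e⟩ := Cardinal.le_def _ _ |>.mp hcard
  have hIic : ∀ z : β, (Set.Iic z).Countable := by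
    intro z
    have h1 : (Set.Iio z).Countable := by
      rw [Cardinal.countable_iff_lt_aleph_one]
      exact Cardinal.mk_Iio_ord_toType z
    rw [← Set.Iio_insert]
    exact h1.insert z
  have hseg : ∀ z : β, ({y : ℝ | e y ≤ z}).Countable := by
    intro z
    have : {y : ℝ | e y ≤ z} = e ⁻¹' (Set.Iic z) := rfl
    rw [this]
    exact (hIic z).preimage e.injective
  set W : β → Submodule ℚ ℝ := fun z => Submodule.span ℚ {y : ℝ | e y ≤ z} with hW
  have hWc : ∀ z : β, ((W z : Set ℝ)).Countable := by
    intro z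
    have hsub : Countable ({y : ℝ | e y ≤ z}) := (hseg z).to_subtype
    have : Countable (Submodule.span ℚ
        (Set.range (fun y : {y : ℝ | e y ≤ z} => (y : ℝ)))) := inferInstance
    rw [Subtype.range_coe_subtype] at this
    exact Set.countable_coe_iff.mp this
  have hmono : ∀ {z₁ z₂ : β}, z₁ ≤ z₂ → W z₁ ≤ W z₂ := by
    intro z₁ z₂ h12
    exact Submodule.span_mono (fun y hy => le_trans hy h12)
  have wf : WellFounded ((· < ·) : β → β → Prop) := wellFounded_lt
  have hex : ∀ x : ℝ, ∃ z : β, x ∈ W z := fun x =>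
    ⟨e x, Submodule.subset_span (le_refl (e x))⟩
  set L : ℝ → β := fun x => wf.min {z : β | x ∈ W z} ⟨_, (hex x).choose_spec⟩ with hL
  have hmem : ∀ x : ℝ, x ∈ W (L x) := fun x =>
    wf.min_mem {z : β | x ∈ W z} ⟨_, (hex x).choose_spec⟩
  have hmin : ∀ x : ℝ, ∀ z : β, z < L x → x ∉ W z := by
    intro x z hz hm
    exact wf.not_lt_min {z : β | x ∈ W z} hm hz
  have memW : ∀ (x : ℝ) (z : β), L x ≤ z → x ∈ W z := fun x z hz => hmono hz (hmem x)
  choose F hF using fun z : β => exists_injOn_nat' (hWc z)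
  set g : ℝ → ℕ := fun x => F (L x) x with hg
  have heq : ∀ x y : ℝ, L x = L y → g x = g y → x = y := by
    intro x y h1 h2
    have hy : y ∈ W (L x) := h1 ▸ hmem y
    have h2' : F (L x) x = F (L y) y := h2
    rw [← h1] at h2'
    exact hF (L x) (hmem x) hy h2'
  refine ⟨g, ?_⟩
  have aux : ∀ a b c d : ℝ, L b ≤ L a → L c ≤ L a → L d ≤ L a →
      a + b = c + d → g a = g b → g a = g c → g a = g d →
      (a = c ∧ b = d) ∨ (a = d ∧ b = c) := by
    intro a b c d hb hc hd habcd gab gac gad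
    rcases eq_or_lt_of_le hc with hc' | hc'
    · have hca : c = a := heq c a hc' gac.symm
      exact Or.inl ⟨hca.symm, by linarith⟩
    rcases eq_or_lt_of_le hd with hd' | hd'
    · have hda : d = a := heq d a hd' gad.symm
      exact Or.inr ⟨hda.symm, by linarith⟩
    rcases eq_or_lt_of_le hb with hb' | hb'
    · exfalso
      have hba : b = a := heq b a hb' gab.symm
      have hz : max (L c) (L d) < L a := max_lt hc' hd'
      have hcd : c + d ∈ W (max (L c) (L d)) :=
        Submodule.add_mem _ (memW c _ (le_max_left _ _)) (memW d _ (le_max_right _ _))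
      have ha : a ∈ W (max (L c) (L d)) := by
        have h2 : a = (2⁻¹ : ℚ) • (c + d) := by
          rw [Rat.smul_def]
          push_cast
          linarith [habcd, hba]
        rw [h2]
        exact Submodule.smul_mem _ _ hcd
      exact hmin a _ hz ha
    · exfalso
      have hz : max (max (L b) (L c)) (L d) < L a := max_lt (max_lt hb' hc') hd'
      have ha : a ∈ W (max (max (L b) (L c)) (L d)) := by
        have h2 : a = c + d - b := by linarith
        rw [h2]
        exact Submodule.sub_mem _
          (Submodule.add_mem _
            (memW c _ (le_max_of_le_left (le_max_right _ _)))
            (memW d _ (le_max_right _ _)))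
          (memW b _ (le_max_of_le_left (le_max_left _ _)))
      exact hmin a _ hz ha
  have aux2 : ∀ a b c d : ℝ, L b ≤ L a → L d ≤ L c →
      a + b = c + d → g a = g b → g a = g c → g a = g d →
      (a = c ∧ b = d) ∨ (a = d ∧ b = c) := by
    intro a b c d hb hd habcd gab gac gad
    rcases le_total (L c) (L a) with h | h
    · exact aux a b c d hb h (hd.trans h) habcd gab gac gad
    · have := aux c d a b hd h (hb.trans h) (by linarith) (by omega) (by omega) (by omega)
      rcases this with ⟨h1, h2⟩ | ⟨h1, h2⟩
      · exact Or.inl ⟨h1.symm, h2.symm⟩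
      · exact Or.inr ⟨h2.symm, h1.symm⟩
  intro a b c d habcd gab gbc gcd
  rcases le_total (L b) (L a) with h1 | h1 <;> rcases le_total (L d) (L c) with h2 | h2
  · exact aux2 a b c d h1 h2 habcd (by omega) (by omega) (by omega)
  · have := aux2 a b d c h1 h2 (by linarith) (by omega) (by omega) (by omega)
    tauto
  · have := aux2 b a c d h1 h2 (by linarith) (by omega) (by omega) (by omega)
    tauto
  · have := aux2 b a d c h1 h2 (by linarith) (by omega) (by omega) (by omega)
    tauto


end
end Aux

universe u_ch

lemma ch_down (h : Cardinal.continuum.{u_ch} = Cardinal.aleph.{u_ch} 1) :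
    Cardinal.continuum.{0} = Cardinal.aleph.{0} 1 := by
  apply Cardinal.lift_injective.{u_ch, 0}
  rw [Cardinal.lift_continuum, Cardinal.lift_aleph, Ordinal.lift_one]
  exact h


/-- Under the Continuum Hypothesis, the hypergraph of non-degenerate rectangles in
`ℝ^n` has countable chromatic number: there is `c : ℝ^n → ℕ` such that no
non-degenerate rectangle is monochromatic. -/
theorem stmt_16 (n : ℕ) (hn : 2 ≤ n)
    (hCH : Cardinal.continuum = Cardinal.aleph 1) :
    ∃ c : EuclideanSpace ℝ (Fin n) → ℕ,
      ∀ x₀ x₁ x₂ x₃ : EuclideanSpace ℝ (Fin n), IsRectangle x₀ x₁ x₂ x₃ →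
        List.Pairwise (· ≠ ·) [x₀, x₁, x₂, x₃] →
        ¬ (c x₀ = c x₁ ∧ c x₁ = c x₂ ∧ c x₂ = c x₃) := by
    classical
  have hCH0 := ch_down hCH
  obtain ⟨g, hg⟩ := ek (by rw [Cardinal.mk_real, hCH0])
  have hcard : Cardinal.mk (EuclideanSpace ℝ (Fin n)) ≤ Cardinal.aleph 1 := by
    have h1 : Cardinal.mk (EuclideanSpace ℝ (Fin n)) = Cardinal.mk (Fin n → ℝ) :=
      Cardinal.mk_congr (WithLp.equiv 2 (Fin n → ℝ))
    rw [h1, Cardinal.mk_arrow]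
    simp only [Cardinal.mk_real, Cardinal.lift_id, Cardinal.mk_fin, Cardinal.lift_natCast]
    rw [← hCH0]
    exact_mod_cast Cardinal.power_nat_le Cardinal.aleph0_le_continuum
  obtain ⟨p, hp⟩ := sier hcard
  set mask : (Fin n → Bool) → EuclideanSpace ℝ (Fin n) → EuclideanSpace ℝ (Fin n) :=
    fun s x => WithLp.toLp 2 (fun i => if s i then x i else 0) with hmask
  set q : EuclideanSpace ℝ (Fin n) → (Fin n → ℕ) × ((Fin n → Bool) → ℕ) :=
    fun x => (fun i => g (x i), fun s => p (mask s x) (mask (fun i => !(s i)) x)) with hq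
  obtain ⟨F, hFinj⟩ := Countable.exists_injective_nat ((Fin n → ℕ) × ((Fin n → Bool) → ℕ))
  refine ⟨fun x => F (q x), ?_⟩
  rintro x₀ x₁ x₂ x₃ ⟨hsum, -⟩ hdist ⟨h01, h12, h23⟩
  simp only [List.pairwise_cons, List.mem_cons, List.mem_singleton, List.not_mem_nil,
    List.Pairwise.nil, forall_eq_or_imp, forall_eq, ne_eq] at hdist
  have hne02 : x₀ ≠ x₂ := by tauto
  have hne03 : x₀ ≠ x₃ := by tauto
  have hq01 : q x₀ = q x₁ := hFinj h01
  have hq02 : q x₀ = q x₂ := hFinj (h01.trans h12)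
  have hq03 : q x₀ = q x₃ := hFinj ((h01.trans h12).trans h23)
  have hsum' : ∀ i, x₀ i + x₁ i = x₂ i + x₃ i := by
    intro i
    have := congrArg (· i) hsum
    simpa [PiLp.add_apply] using this
  have dich : ∀ i, (x₀ i = x₂ i ∧ x₁ i = x₃ i) ∨ (x₀ i = x₃ i ∧ x₁ i = x₂ i) := by
    intro i
    refine hg _ _ _ _ (hsum' i) ?_ ?_ ?_
    · exact congrFun (congrArg Prod.fst hq01) i
    · exact (congrFun (congrArg Prod.fst hq01) i).symm.trans
        (congrFun (congrArg Prod.fst hq02) i)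
    · exact (congrFun (congrArg Prod.fst hq02) i).symm.trans
        (congrFun (congrArg Prod.fst hq03) i)
  set s : Fin n → Bool := fun i => if x₂ i = x₀ i then true else false with hs
  have hsT : ∀ i, s i = true → x₂ i = x₀ i ∧ x₃ i = x₁ i := by
    intro i hi
    have h2 : x₂ i = x₀ i := by
      by_contra hcon
      simp [hs, hcon] at hi
    refine ⟨h2, by linarith [hsum' i]⟩
  have hsF : ∀ i, s i = false → x₂ i = x₁ i ∧ x₃ i = x₀ i := by
    intro i hi
    have h2 : ¬ (x₂ i = x₀ i) := by
      by_contra hcon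
      simp at hcon
      simp [hs, hcon] at hi
    rcases dich i with ⟨ha, hb⟩ | ⟨ha, hb⟩
    · exact absurd ha.symm h2
    · exact ⟨hb.symm, ha.symm⟩
  set s' : Fin n → Bool := fun i => !(s i) with hs'
  set A := mask s x₀ with hA
  set A' := mask s x₁ with hA'
  set B := mask s' x₀ with hB
  set B' := mask s' x₁ with hB'
  have hm2a : mask s x₂ = A := by
    ext i
    simp only [hA, hmask, PiLp.toLp_apply]
    cases hsi : s i
    · simp
    · simp only [if_pos rfl]
      exact (hsT i hsi).1
  have hm2b : mask s' x₂ = B' := by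
    ext i
    simp only [hB', hmask, PiLp.toLp_apply]
    cases hsi : s i
    · simp only [hs', hsi, Bool.not_false, if_pos rfl]
      exact (hsF i hsi).1
    · simp [hs', hsi]
  have hm3a : mask s x₃ = A' := by
    ext i
    simp only [hA', hmask, PiLp.toLp_apply]
    cases hsi : s i
    · simp
    · simp only [if_pos rfl]
      exact (hsT i hsi).2
  have hm3b : mask s' x₃ = B := by
    ext i
    simp only [hB, hmask, PiLp.toLp_apply]
    cases hsi : s i
    · simp only [hs', hsi, Bool.not_false, if_pos rfl]
      exact (hsF i hsi).2
    · simp [hs', hsi]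
  have hAne : A ≠ A' := by
    intro hAA
    apply hne03
    ext i
    cases hsi : s i
    · exact (hsF i hsi).2.symm
    · have h1 := congrArg (· i) hAA
      simp only [hA, hA', hmask, PiLp.toLp_apply, hsi] at h1
      rw [if_pos trivial, if_pos trivial] at h1
      have := (hsT i hsi).2
      rw [this]; exact h1
  have hBne : B ≠ B' := by
    intro hBB
    apply hne02
    ext i
    cases hsi : s i
    · have h1 := congrArg (· i) hBB
      simp only [hB, hB', hmask, PiLp.toLp_apply, hs', hsi] at h1
      simp only [Bool.not_false, if_pos rfl] at h1
      have := (hsF i hsi).1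
      rw [this]; exact h1
    · exact ((hsT i hsi).1).symm
  have e03 : p A B = p A' B := by
    have := congrFun (congrArg Prod.snd hq03) s
    simp only [hq] at this
    rw [hm3a, hm3b] at this
    exact this
  have e02 : p A B = p A B' := by
    have := congrFun (congrArg Prod.snd hq02) s
    simp only [hq] at this
    rw [hm2a, hm2b] at this
    exact this
  exact hp A A' B B' hAne hBne e03 e02
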